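/- Let 2 ≤ n < d be integers and 0 ≤ α₁ ≤ ⋯ ≤ αₙ < d with gcd(α₁,…,αₙ,d) = 1. Let A = {(a₁,…,aₙ) ∈ ℤ₍≥0₎ⁿ : a₁+⋯+aₙ ≤ d and α₁a₁+⋯+αₙaₙ ≡ 0 (mod d)}. Then every element a ∈ ∪_{t≥0} tA with some coordinate a_i ≥ d satisfies a − d·e_i ∈ ∪_{t≥0} tA; consequently every B-minimal element of ∪_{t≥0} tA (with B = {0, d·e₁, …, d·eₙ}) has all coordinates strictly less than d. -/

import Mathlib

open Pointwise Finset

/-- Zero-sum block extraction: if `a ≥ 0` has coordinate sum `> d`, there is `0 ≤ b ≤ a`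
with `0 < |b| ≤ d` and `d ∣ α·b`. -/
private lemma exists_block {n : ℕ} (d : ℕ) (hd : 0 < d) (α : Fin n → ℕ) (a : Fin n → ℤ)
    (ha : ∀ i, 0 ≤ a i) (hsum : (d : ℤ) < ∑ i, a i) :
    ∃ b : Fin n → ℤ, (∀ i, 0 ≤ b i) ∧ (∀ i, b i ≤ a i) ∧ 0 < (∑ i, b i) ∧
      (∑ i, b i) ≤ (d : ℤ) ∧ (d : ℤ) ∣ ∑ i, (α i : ℤ) * b i := by
  haveI : NeZero d := ⟨hd.ne'⟩
  set A' : ℕ → ℤ := fun j => if h : j < n then a ⟨j, h⟩ else 0 with hA'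
  set p : ℕ → ℤ := fun m => ∑ j ∈ range m, A' j with hp
  have hA'nonneg : ∀ j, 0 ≤ A' j := by
    intro j
    by_cases h : j < n
    · simpa [hA', h] using ha ⟨j, h⟩
    · simp [hA', h]
  have hpmono : Monotone p := fun m m' h =>
    Finset.sum_le_sum_of_subset_of_nonneg (Finset.range_subset_range.2 h) (fun j _ _ => hA'nonneg j)
  have hpn : p n = ∑ i, a i := by
    show ∑ j ∈ range n, A' j = ∑ i, a i
    rw [← Fin.sum_univ_eq_sum_range]
    exact Finset.sum_congr rfl (fun i _ => by simp [hA', i.isLt])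
  set c : ℤ → Fin n → ℤ := fun k i => min k (p (i.1 + 1)) - min k (p i.1) with hc
  have hsucc : ∀ i : Fin n, p (i.1 + 1) = p i.1 + a i := by
    intro i
    show ∑ j ∈ range (i.1 + 1), A' j = (∑ j ∈ range i.1, A' j) + a i
    rw [Finset.sum_range_succ]
    congr 1
    simp [hA', i.isLt]
  have hstep : ∀ i : Fin n, p i.1 ≤ p (i.1 + 1) := fun i => hpmono (Nat.le_succ i.1)
  have hcnonneg : ∀ (k : ℤ) (i : Fin n), 0 ≤ c k i := by
    intro k i
    have := hstep i
    show 0 ≤ min k (p (i.1 + 1)) - min k (p i.1)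
    omega
  have hcle : ∀ (k : ℤ) (i : Fin n), c k i ≤ a i := by
    intro k i
    have h1 := hsucc i
    have h2 := ha i
    show min k (p (i.1 + 1)) - min k (p i.1) ≤ a i
    omega
  have hcmono : ∀ (k l : ℤ), k ≤ l → ∀ i, c k i ≤ c l i := by
    intro k l hkl i
    have := hstep i
    show min k (p (i.1 + 1)) - min k (p i.1) ≤ min l (p (i.1 + 1)) - min l (p i.1)
    omega
  have hsumc : ∀ k : ℤ, 0 ≤ k → ∑ i, c k i = min k (p n) := by
    intro k hk
    have htel := Finset.sum_range_sub (fun j => min k (p j)) n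
    have heq : ∑ i : Fin n, c k i = ∑ j ∈ range n, (min k (p (j + 1)) - min k (p j)) :=
      Fin.sum_univ_eq_sum_range (fun j => min k (p (j + 1)) - min k (p j)) n
    rw [heq, htel]
    have hp0 : p 0 = 0 := by show ∑ j ∈ range 0, A' j = 0; simp
    rw [hp0, min_eq_right hk, sub_zero]
  set F : Fin (d + 1) → ZMod d := fun k => ((∑ i, (α i : ℤ) * c (k.1 : ℤ) i : ℤ) : ZMod d) with hF
  have hcard : Fintype.card (ZMod d) < Fintype.card (Fin (d + 1)) := by simp [ZMod.card]
  obtain ⟨k, l, hkl, hFkl⟩ := Fintype.exists_ne_map_eq_of_card_lt F hcard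
  have main : ∀ k l : Fin (d + 1), k.1 < l.1 → F k = F l →
      ∃ b : Fin n → ℤ, (∀ i, 0 ≤ b i) ∧ (∀ i, b i ≤ a i) ∧ 0 < (∑ i, b i) ∧
        (∑ i, b i) ≤ (d : ℤ) ∧ (d : ℤ) ∣ ∑ i, (α i : ℤ) * b i := by
    clear hkl hFkl k l
    intro k l hkl hFkl
    have hld : (l.1 : ℤ) ≤ d := by exact_mod_cast Nat.lt_succ_iff.1 l.isLt
    have hkd : (k.1 : ℤ) ≤ d := by exact_mod_cast Nat.lt_succ_iff.1 k.isLt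
    have hklZ : (k.1 : ℤ) < (l.1 : ℤ) := by exact_mod_cast hkl
    have hk0 : (0 : ℤ) ≤ (k.1 : ℤ) := Int.natCast_nonneg _
    have hl0 : (0 : ℤ) ≤ (l.1 : ℤ) := Int.natCast_nonneg _
    have hsums : (∑ i, (c (l.1 : ℤ) i - c (k.1 : ℤ) i))
        = min (l.1 : ℤ) (p n) - min (k.1 : ℤ) (p n) := by
      rw [Finset.sum_sub_distrib, hsumc _ hl0, hsumc _ hk0]
    refine ⟨fun i => c (l.1 : ℤ) i - c (k.1 : ℤ) i, ?_, ?_, ?_, ?_, ?_⟩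
    · intro i
      have := hcmono (k.1 : ℤ) (l.1 : ℤ) hklZ.le i
      show 0 ≤ c (l.1 : ℤ) i - c (k.1 : ℤ) i
      omega
    · intro i
      have h1 := hcle (l.1 : ℤ) i
      have h2 := hcnonneg (k.1 : ℤ) i
      show c (l.1 : ℤ) i - c (k.1 : ℤ) i ≤ a i
      omega
    · show 0 < ∑ i, (c (l.1 : ℤ) i - c (k.1 : ℤ) i)
      rw [hsums, hpn, min_eq_left (by omega), min_eq_left (by omega)]
      omega
    · show ∑ i, (c (l.1 : ℤ) i - c (k.1 : ℤ) i) ≤ (d : ℤ)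
      rw [hsums, hpn, min_eq_left (by omega), min_eq_left (by omega)]
      omega
    · show (d : ℤ) ∣ ∑ i, (α i : ℤ) * (c (l.1 : ℤ) i - c (k.1 : ℤ) i)
      have hsplit : ∑ i, (α i : ℤ) * (c (l.1 : ℤ) i - c (k.1 : ℤ) i)
          = (∑ i, (α i : ℤ) * c (l.1 : ℤ) i) - ∑ i, (α i : ℤ) * c (k.1 : ℤ) i := by
        rw [← Finset.sum_sub_distrib]
        exact Finset.sum_congr rfl fun i _ => mul_sub _ _ _
      rw [hsplit]
      have hz : (((∑ i, (α i : ℤ) * c (l.1 : ℤ) i)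
          - ∑ i, (α i : ℤ) * c (k.1 : ℤ) i : ℤ) : ZMod d) = 0 := by
        push_cast
        rw [sub_eq_zero]
        have h1 : F k = ((∑ i, (α i : ℤ) * c (k.1 : ℤ) i : ℤ) : ZMod d) := rfl
        have h2 : F l = ((∑ i, (α i : ℤ) * c (l.1 : ℤ) i : ℤ) : ZMod d) := rfl
        have := hFkl
        rw [h1, h2] at this
        push_cast at this
        exact this.symm
      exact (ZMod.intCast_zmod_eq_zero_iff_dvd _ d).1 hz
  rcases Ne.lt_or_gt hkl with h | h
  · exact main k l h hFkl
  · exact main l k h hFkl.symm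

/-- Every nonnegative vector with `d ∣ α·a` lies in some `t • A`. -/
private lemma mem_some_smul {n d : ℕ} (hd : 0 < d) (α : Fin n → ℕ) (A : Set (Fin n → ℤ))
    (hA : A = {a | (∀ i, 0 ≤ a i) ∧ (∑ i, a i) ≤ (d : ℤ) ∧
      (d : ℤ) ∣ ∑ i, (α i : ℤ) * a i}) :
    ∀ N : ℕ, ∀ a : Fin n → ℤ, (∑ i, a i) ≤ (N : ℤ) → (∀ i, 0 ≤ a i) →
      (d : ℤ) ∣ (∑ i, (α i : ℤ) * a i) → ∃ t : ℕ, a ∈ t • A := by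
  intro N
  induction N with
  | zero =>
    intro a hle hpos hdvd
    exact ⟨1, by
      rw [one_nsmul, hA]
      exact ⟨hpos, hle.trans (by exact_mod_cast Nat.zero_le d), hdvd⟩⟩
  | succ N ih =>
    intro a hle hpos hdvd
    by_cases hcase : (∑ i, a i) ≤ (d : ℤ)
    · exact ⟨1, by rw [one_nsmul, hA]; exact ⟨hpos, hcase, hdvd⟩⟩
    · push_neg at hcase
      obtain ⟨b, hb0, hba, hbpos, hbd, hbdvd⟩ := exists_block d hd α a hpos hcase
      have hbA : b ∈ A := by rw [hA]; exact ⟨hb0, hbd, hbdvd⟩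
      have hsub : ∑ i, (a - b) i = ∑ i, a i - ∑ i, b i := by
        simp [Finset.sum_sub_distrib]
      obtain ⟨t, ht⟩ := ih (a - b)
        (by rw [hsub]; push_cast at hle ⊢; omega)
        (fun i => by have h1 := hba i; have h2 := hb0 i; simp only [Pi.sub_apply]; omega)
        (by
          have heq : ∑ i, (α i : ℤ) * (a - b) i
              = (∑ i, (α i : ℤ) * a i) - ∑ i, (α i : ℤ) * b i := by
            rw [← Finset.sum_sub_distrib]
            exact Finset.sum_congr rfl fun i _ => by simp only [Pi.sub_apply]; ring
          rw [heq]
          exact dvd_sub hdvd hbdvd)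
      refine ⟨t + 1, ?_⟩
      have := Set.add_mem_add ht hbA
      rw [sub_add_cancel] at this
      rwa [succ_nsmul]

/-- Let `2 ≤ n < d`, `0 ≤ α₁ ≤ ⋯ ≤ αₙ < d` with `gcd(α₁,…,αₙ,d) = 1`, and let
`A = {a ∈ ℤ₍≥0₎ⁿ : |a| ≤ d, α·a ≡ 0 (mod d)}`. Then every element `a` of the semigroup
`H = ∪_t tA` with some coordinate `a i ≥ d` satisfies `a − d·eᵢ ∈ H`; consequently every
`B`-minimal element of `H` (with `B = {0, d·e₁, …, d·eₙ}`) has all coordinates `< d`. -/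
theorem stmt_19 (n d : ℕ) (hn : 2 ≤ n) (hnd : n < d)
    (α : Fin n → ℕ) (hmono : Monotone α) (hαd : ∀ i, α i < d)
    (hgcd : Nat.gcd (Finset.univ.gcd α) d = 1)
    (A : Set (Fin n → ℤ))
    (hA : A = {a | (∀ i, 0 ≤ a i) ∧ (∑ i, a i) ≤ (d : ℤ) ∧
      (d : ℤ) ∣ ∑ i, (α i : ℤ) * a i})
    (H : Set (Fin n → ℤ)) (hH : H = ⋃ t : ℕ, t • A) :
    (∀ a ∈ H, ∀ i : Fin n, (d : ℤ) ≤ a i → a - Pi.single i (d : ℤ) ∈ H) ∧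
    (∀ a ∈ H, (∀ i : Fin n, a - Pi.single i (d : ℤ) ∉ H) → ∀ i, a i < (d : ℤ)) := by
  have hd : 0 < d := lt_of_le_of_lt (Nat.zero_le n) hnd
  have hHsub : ∀ a ∈ H, (∀ i, 0 ≤ a i) ∧ (d : ℤ) ∣ ∑ i, (α i : ℤ) * a i := by
    have key : ∀ t : ℕ, ∀ a ∈ t • A, (∀ i, 0 ≤ a i) ∧ (d : ℤ) ∣ ∑ i, (α i : ℤ) * a i := by
      intro t
      induction t with
      | zero =>
        intro a ha
        rw [zero_nsmul] at ha
        rw [Set.mem_zero] at ha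
        subst ha
        simp
      | succ t ih =>
        intro a ha
        rw [succ_nsmul] at ha
        rw [Set.mem_add] at ha
        obtain ⟨x, hx, y, hy, hxy⟩ := ha
        obtain ⟨hx0, hxdvd⟩ := ih x hx
        rw [hA] at hy
        obtain ⟨hy0, -, hydvd⟩ := hy
        subst hxy
        refine ⟨fun i => add_nonneg (hx0 i) (hy0 i), ?_⟩
        have heq : ∑ i, (α i : ℤ) * (x + y) i
            = (∑ i, (α i : ℤ) * x i) + ∑ i, (α i : ℤ) * y i := by
          rw [← Finset.sum_add_distrib]
          exact Finset.sum_congr rfl fun i _ => by simp only [Pi.add_apply]; ring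
        rw [heq]
        exact dvd_add hxdvd hydvd
    intro a ha
    rw [hH, Set.mem_iUnion] at ha
    obtain ⟨t, ht⟩ := ha
    exact key t a ht
  have part1 : ∀ a ∈ H, ∀ i : Fin n, (d : ℤ) ≤ a i → a - Pi.single i (d : ℤ) ∈ H := by
    intro a ha i hi
    obtain ⟨ha0, hadvd⟩ := hHsub a ha
    set b : Fin n → ℤ := a - Pi.single i (d : ℤ) with hb
    have hb0 : ∀ j, 0 ≤ b j := by
      intro j
      by_cases h : j = i
      · subst h
        have : b j = a j - d := by simp [hb]
        omega
      · have : b j = a j := by simp [hb, Pi.single_eq_of_ne (M := fun _ : Fin n => ℤ) h ((d : ℕ) : ℤ)]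
        rw [this]; exact ha0 j
    have hbdvd : (d : ℤ) ∣ ∑ j, (α j : ℤ) * b j := by
      have hsingle : ∑ j, (α j : ℤ) * (Pi.single i (d : ℤ) : Fin n → ℤ) j = (α i : ℤ) * d := by
        rw [Finset.sum_eq_single i]
        · simp
        · intro j _ hj
          rw [Pi.single_eq_of_ne (M := fun _ : Fin n => ℤ) hj ((d : ℕ) : ℤ), mul_zero]
        · simp
      have heq : ∑ j, (α j : ℤ) * b j = (∑ j, (α j : ℤ) * a j) - (α i : ℤ) * d := by
        rw [← hsingle, ← Finset.sum_sub_distrib]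
        exact Finset.sum_congr rfl fun j _ => by simp only [hb, Pi.sub_apply]; ring
      rw [heq]
      exact dvd_sub hadvd ⟨(α i : ℤ), mul_comm _ _⟩
    obtain ⟨t, ht⟩ := mem_some_smul hd α A hA (∑ j, b j).toNat b
      (by rw [Int.toNat_of_nonneg (Finset.sum_nonneg fun j _ => hb0 j)]) hb0 hbdvd
    rw [hH, Set.mem_iUnion]
    exact ⟨t, ht⟩
  refine ⟨part1, ?_⟩
  intro a ha hmin i
  by_contra h
  push_neg at h
  exact hmin i (part1 a ha i h)
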